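/- With notation as above (p_1 ≤ ... ≤ p_m nonnegative integers, a, b integers, j ≥ 0), the sum F(k) = Σ_{|β| = k-b} C(pβ + a, j) satisfies C(k-b+m-1, m-1) * C(p_1(k-b)+a, j) ≤ F(k) ≤ C(k-b+m-1, m-1) * C(p_m(k-b)+a, j) for k ≫ 0, and equality F(k) = C(k-b+m-1, m-1) * C(p_m(k-b)+a, j) holds for all k ≫ 0 and all j if and only if p_1 = p_2 = ... = p_m. -/

import Mathlib

open Finset

open Polynomial

/-- integer-valued generalized binomial coefficient -/
def zc (z : ℤ) (j : ℕ) : ℤ :=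
  if 0 ≤ z then (z.toNat.choose j : ℤ) else (-1) ^ j * (((j : ℤ) - 1 - z).toNat.choose j : ℤ)

lemma descPochhammer_smeval_eq_eval (x : ℚ) (j : ℕ) :
    (descPochhammer ℤ j).smeval x = (descPochhammer ℚ j).eval x := by
  rw [Polynomial.descPochhammer_smeval_eq_ascPochhammer,
    Polynomial.ascPochhammer_smeval_eq_eval, descPochhammer_eval_eq_ascPochhammer]

lemma factorial_mul_ringChoose (x : ℚ) (j : ℕ) :
    (j.factorial : ℚ) * Ring.choose x j = (descPochhammer ℚ j).eval x := by
  rw [← descPochhammer_smeval_eq_eval, Ring.descPochhammer_eq_factorial_smul_choose,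
    nsmul_eq_mul]

lemma ringChoose_neg (s j : ℕ) :
    Ring.choose (-(s : ℚ) - 1) j = (-1) ^ j * ((s + j).choose j : ℚ) := by
  have hf : (j.factorial : ℚ) ≠ 0 := by exact_mod_cast j.factorial_ne_zero
  apply mul_left_cancel₀ hf
  rw [factorial_mul_ringChoose, descPochhammer_eval_eq_ascPochhammer]
  have h1 : (-(s : ℚ) - 1 - j + 1) = -((s + j : ℕ) : ℚ) := by push_cast; ring
  rw [h1, ascPochhammer_eval_neg_eq_descPochhammer]
  have h2 : (descPochhammer ℚ j).eval (((s + j : ℕ) : ℚ)) = ((s + j).descFactorial j : ℚ) := by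
    exact_mod_cast descPochhammer_eval_eq_descFactorial ℚ (s + j) j
  rw [h2, Nat.descFactorial_eq_factorial_mul_choose]
  push_cast
  ring

lemma ringChoose_int (z : ℤ) (j : ℕ) : Ring.choose ((z : ℚ)) j = (zc z j : ℚ) := by
  rcases le_or_gt 0 z with hz | hz
  · rw [zc, if_pos hz]
    have : ((z : ℚ)) = ((z.toNat : ℕ) : ℚ) := by
      exact_mod_cast congrArg (Int.cast : ℤ → ℚ) (Int.toNat_of_nonneg hz).symm
    rw [this, Ring.choose_natCast]
    push_cast; ring
  · rw [zc, if_neg (not_le.mpr hz)]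
    set s : ℕ := (-z - 1).toNat with hs
    have hzs : z = -(s : ℤ) - 1 := by
      rw [hs]; omega
    have h1 : ((z : ℚ)) = -(s : ℚ) - 1 := by rw [hzs]; push_cast; ring
    have h2 : ((j : ℤ) - 1 - z).toNat = s + j := by omega
    rw [h1, ringChoose_neg, h2]
    push_cast; ring

lemma zc_natCast (n : ℕ) (j : ℕ) : zc (n : ℤ) j = (n.choose j : ℤ) := by
  rw [zc, if_pos (Int.natCast_nonneg n), Int.toNat_natCast]

lemma zc_mono {y x : ℤ} (j : ℕ) (hy : 0 ≤ y) (hyx : y ≤ x) : zc y j ≤ zc x j := by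
  rw [zc, if_pos hy, zc, if_pos (hy.trans hyx)]
  exact_mod_cast Nat.choose_le_choose j (by omega)

lemma zc_nonneg_even {j : ℕ} (hj : Even j) (z : ℤ) : 0 ≤ zc z j := by
  rw [zc]
  split
  · positivity
  · rw [hj.neg_one_pow]
    positivity

lemma zc_one (z : ℤ) : zc z 1 = z := by
  rw [zc]
  split <;> simp <;> omega

lemma zc_zero (z : ℤ) : zc z 0 = 1 := by
  rw [zc]; split <;> simp

/-- upper-bound comparison lemma -/
lemma zc_le_big {y x : ℤ} {a : ℤ} (j : ℕ) (hay : a ≤ y) (hyx : y ≤ x)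
    (hxj : (j : ℤ) ≤ x) (hxa : (j : ℤ) - 1 - a ≤ x) : zc y j ≤ zc x j := by
  rcases le_or_gt 0 y with hy | hy
  · exact zc_mono j hy hyx
  · rw [zc, if_neg (not_le.mpr hy), zc, if_pos (by omega)]
    have h1 : ((-1 : ℤ)) ^ j * ((((j : ℤ) - 1 - y).toNat.choose j : ℤ)) ≤
        (((j : ℤ) - 1 - y).toNat.choose j : ℤ) := by
      rcases Nat.even_or_odd j with he | ho
      · rw [he.neg_one_pow, one_mul]
      · rw [ho.neg_one_pow, neg_mul, one_mul]
        exact neg_le_self (by positivity)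
    refine h1.trans ?_
    exact_mod_cast Nat.choose_le_choose j
      (show ((j : ℤ) - 1 - y).toNat ≤ x.toNat by omega)

/-- lower-bound comparison when the base value is nonpositive -/
lemma zc_ge_of_nonpos {y : ℤ} {a : ℤ} (j : ℕ) (hB : zc a j ≤ 0) (hay : a ≤ y) :
    zc a j ≤ zc y j := by
  rcases le_or_gt 0 a with ha | ha
  · have h0 : 0 ≤ zc y j := by
      rw [zc, if_pos (by omega)]; positivity
    omega
  · rcases Nat.even_or_odd j with he | ho
    · exact hB.trans (zc_nonneg_even he y)
    · rw [zc, if_neg (not_le.mpr ha), ho.neg_one_pow]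
      rcases le_or_gt 0 y with hy | hy
      · rw [zc, if_pos hy]
        have : (0:ℤ) ≤ (y.toNat.choose j : ℤ) := by positivity
        omega
      · rw [zc, if_neg (not_le.mpr hy), ho.neg_one_pow]
        have := Nat.choose_le_choose j
          (show ((j : ℤ) - 1 - y).toNat ≤ ((j : ℤ) - 1 - a).toNat by omega)
        omega

lemma even_of_zc_pos {a : ℤ} {j : ℕ} (ha : a < 0) (hB : 0 < zc a j) : Even j := by
  by_contra hodd
  have ho : Odd j := Nat.not_even_iff_odd.mp hodd
  rw [zc, if_neg (not_le.mpr ha), ho.neg_one_pow] at hB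
  have : (0:ℤ) ≤ (((j : ℤ) - 1 - a).toNat.choose j : ℤ) := by positivity
  omega

/-- `C(x+j, j) ≥ x+1` -/
lemma choose_add_ge (x j : ℕ) (hj : 1 ≤ j) : x + 1 ≤ (x + j).choose j := by
  have h1 : (x + j).choose j = (x + j).choose x := by
    rw [← Nat.choose_symm (Nat.le_add_left j x)]
    congr 1; omega
  rw [h1]
  calc x + 1 = (x + 1).choose x := by
        rw [← Nat.choose_symm (by omega)]
        simp
    _ ≤ (x + j).choose x := Nat.choose_le_choose x (by omega)

/-- `zc x j ≥ c+1` when `x ≥ j + c` -/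
lemma zc_big {x : ℤ} {j c : ℕ} (hj : 1 ≤ j) (hx : (j : ℤ) + c ≤ x) : (c : ℤ) + 1 ≤ zc x j := by
  rw [zc, if_pos (by omega)]
  have h3 : (c + j).choose j ≤ x.toNat.choose j :=
    Nat.choose_le_choose j (by omega)
  have h4 : c + 1 ≤ (c + j).choose j := choose_add_ge c j hj
  omega

/-! ### cardinality of antidiagonalTuple -/

lemma antidiagonal_map_sum (g : ℕ → ℕ) :
    ∀ n : ℕ, ((List.Nat.antidiagonal n).map (fun p => g p.2)).sum = ∑ i ∈ Finset.range (n+1), g i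
  | 0 => by simp [List.Nat.antidiagonal_zero]
  | n + 1 => by
    rw [List.Nat.antidiagonal_succ, List.map_cons, List.sum_cons, List.map_map]
    have hc : ((fun p : ℕ × ℕ => g p.2) ∘ Prod.map Nat.succ id) = fun p : ℕ × ℕ => g p.2 := by
      funext p; rfl
    rw [hc, antidiagonal_map_sum g n, Finset.sum_range_succ _ (n + 1)]
    exact Nat.add_comm _ _

lemma sum_range_multichoose (k : ℕ) :
    ∀ n : ℕ, ∑ i ∈ Finset.range (n+1), Nat.multichoose k i = Nat.multichoose (k+1) n
  | 0 => by simp [Nat.multichoose]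
  | n + 1 => by
    rw [Finset.sum_range_succ, sum_range_multichoose k n, Nat.multichoose_succ_succ]
    omega

lemma length_antidiagonalTuple :
    ∀ (k n : ℕ), (List.Nat.antidiagonalTuple k n).length = Nat.multichoose k n
  | 0, 0 => by simp [Nat.multichoose]
  | 0, n + 1 => by simp [Nat.multichoose_eq, Nat.choose_eq_zero_of_lt]
  | k + 1, n => by
    rw [List.Nat.antidiagonalTuple, List.length_flatMap]
    simp only [Function.comp_def, List.length_map]
    have h1 : ∀ p ∈ List.Nat.antidiagonal n,
        (List.Nat.antidiagonalTuple k p.2).length = Nat.multichoose k p.2 :=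
      fun p _ => length_antidiagonalTuple k p.2
    rw [List.map_congr_left h1, antidiagonal_map_sum, sum_range_multichoose]

lemma card_antidiagonalTuple (k n : ℕ) :
    (Finset.Nat.antidiagonalTuple k n).card = Nat.multichoose k n :=
  length_antidiagonalTuple k n

lemma card_antidiagonalTuple' {m : ℕ} (hm : 1 ≤ m) (n : ℕ) :
    (Finset.Nat.antidiagonalTuple m n).card = (n + m - 1).choose (m - 1) := by
  rw [card_antidiagonalTuple, Nat.multichoose_eq]
  have h1 : m + n - 1 = n + m - 1 := by omega
  rw [h1, ← Nat.choose_symm (by omega : n ≤ n + m - 1)]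
  congr 1
  omega

/-! ### arithmetic claims -/

lemma claim_CC (r q : ℕ) : ∀ h : ℕ,
    (q + h + r).choose r * q ^ h ≤ (q + r).choose r * (q + h + r) ^ h
  | 0 => by simp
  | h + 1 => by
    have key : (q + h + r).choose r * (q + h + r + 1) = (q + h + r + 1).choose r * (q + h + 1) := by
      have := Nat.choose_mul_succ_eq (q + h + r) r
      have h2 : q + h + r + 1 - r = q + h + 1 := by omega
      rw [h2] at this
      exact this
    have IH := claim_CC r q h
    have step : (q + h + 1 + r).choose r * q ^ (h + 1) * (q + h + 1) ≤
        (q + r).choose r * (q + h + 1 + r) ^ (h + 1) * (q + h + 1) := by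
      calc (q + h + 1 + r).choose r * q ^ (h + 1) * (q + h + 1)
          = ((q + h + r + 1).choose r * (q + h + 1)) * (q ^ h * q) := by ring_nf
        _ = ((q + h + r).choose r * (q + h + r + 1)) * (q ^ h * q) := by rw [← key]
        _ = ((q + h + r).choose r * q ^ h) * ((q + h + r + 1) * q) := by ring
        _ ≤ ((q + r).choose r * (q + h + r) ^ h) * ((q + h + r + 1) * q) :=
            Nat.mul_le_mul_right _ IH
        _ ≤ ((q + r).choose r * (q + h + r + 1) ^ h) * ((q + h + r + 1) * (q + h + 1)) :=
            Nat.mul_le_mul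
              (Nat.mul_le_mul_left _ (Nat.pow_le_pow_left (by omega) h))
              (Nat.mul_le_mul_left _ (by omega))
        _ = (q + r).choose r * (q + h + 1 + r) ^ (h + 1) * (q + h + 1) := by ring_nf
    exact Nat.le_of_mul_le_mul_right step (by omega)

lemma claim_E (q s : ℕ) : ∀ h : ℕ, (q + s) ^ (h + 1) ≤ q ^ (h + 1) + (h + 1) * s * (q + s) ^ h
  | 0 => by simp
  | h + 1 => by
    have IH := claim_E q s h
    calc (q + s) ^ (h + 2) = (q + s) * (q + s) ^ (h + 1) := by ring
      _ ≤ (q + s) * (q ^ (h + 1) + (h + 1) * s * (q + s) ^ h) := Nat.mul_le_mul_left _ IH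
      _ = q ^ (h + 2) + s * q ^ (h + 1) + (h + 1) * s * (q + s) ^ (h + 1) := by ring
      _ ≤ q ^ (h + 2) + s * (q + s) ^ (h + 1) + (h + 1) * s * (q + s) ^ (h + 1) :=
          Nat.add_le_add_right (Nat.add_le_add_left
            (Nat.mul_le_mul_left _ (Nat.pow_le_pow_left (Nat.le_add_right q s) _)) _) _
      _ = q ^ (h + 2) + (h + 2) * s * (q + s) ^ (h + 1) := by ring

lemma claim_PP (B s q : ℕ) (h : ℕ) (hh : 1 ≤ h) (hsq : s ≤ q) (hq : B * h * s * 2 ^ h ≤ q) :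
    B * (q + s) ^ h ≤ (B + 1) * q ^ h := by
  obtain ⟨h', rfl⟩ : ∃ h', h = h' + 1 := ⟨h - 1, by omega⟩
  have hE := claim_E q s h'
  have hdouble : (q + s) ^ h' ≤ 2 ^ h' * q ^ h' := by
    calc (q + s) ^ h' ≤ (2 * q) ^ h' := Nat.pow_le_pow_left (by omega) _
      _ = 2 ^ h' * q ^ h' := by rw [mul_pow]
  have h1 : B * (q + s) ^ (h' + 1) ≤ B * q ^ (h' + 1) + B * ((h' + 1) * s * (q + s) ^ h') := by
    calc B * (q + s) ^ (h' + 1)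
        ≤ B * (q ^ (h' + 1) + (h' + 1) * s * (q + s) ^ h') := Nat.mul_le_mul_left _ hE
      _ = B * q ^ (h' + 1) + B * ((h' + 1) * s * (q + s) ^ h') := by ring
  have h2 : B * ((h' + 1) * s * (q + s) ^ h') ≤ (B * (h' + 1) * s * 2 ^ h') * q ^ h' := by
    calc B * ((h' + 1) * s * (q + s) ^ h')
        ≤ B * ((h' + 1) * s * (2 ^ h' * q ^ h')) :=
          Nat.mul_le_mul_left _ (Nat.mul_le_mul_left _ hdouble)
      _ = (B * (h' + 1) * s * 2 ^ h') * q ^ h' := by ring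
  have h3 : B * (h' + 1) * s * 2 ^ h' ≤ q := by
    have hp : (2:ℕ) ^ h' ≤ 2 ^ (h' + 1) := Nat.pow_le_pow_right (by omega) (by omega)
    have := Nat.mul_le_mul_left (B * (h' + 1) * s) hp
    calc B * (h' + 1) * s * 2 ^ h' ≤ B * (h' + 1) * s * 2 ^ (h' + 1) := this
      _ ≤ q := hq
  have h4 : (B * (h' + 1) * s * 2 ^ h') * q ^ h' ≤ q * q ^ h' := Nat.mul_le_mul_right _ h3
  have h5 : q * q ^ h' = q ^ (h' + 1) := by ring
  have h6 : B * (q + s) ^ (h' + 1) ≤ B * q ^ (h' + 1) + q ^ (h' + 1) :=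
    h1.trans (Nat.add_le_add_left (h2.trans (h4.trans_eq h5)) _)
  have h7 : (B + 1) * q ^ (h' + 1) = B * q ^ (h' + 1) + q ^ (h' + 1) := by ring
  omega

/-! ### bijections on antidiagonalTuple -/

open Finset

lemma sum_coord_eq (m n : ℕ) (t t' : Fin m) :
    ∑ β ∈ Finset.Nat.antidiagonalTuple m n, β t = ∑ β ∈ Finset.Nat.antidiagonalTuple m n, β t' := by
  refine Finset.sum_nbij' (fun β => β ∘ Equiv.swap t t') (fun β => β ∘ Equiv.swap t t')
    ?_ ?_ ?_ ?_ ?_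
  · intro β hβ
    rw [Finset.Nat.mem_antidiagonalTuple] at hβ ⊢
    rw [← hβ]
    exact Equiv.sum_comp (Equiv.swap t t') β
  · intro β hβ
    rw [Finset.Nat.mem_antidiagonalTuple] at hβ ⊢
    rw [← hβ]
    exact Equiv.sum_comp (Equiv.swap t t') β
  · intro β _; funext x; simp [Equiv.swap_apply_self]
  · intro β _; funext x; simp [Equiv.swap_apply_self]
  · intro β _
    simp [Equiv.swap_apply_right]

lemma sum_update_univ {m : ℕ} (β : Fin m → ℕ) (L : Fin m) (v : ℕ) :
    ∑ i, Function.update β L v i = v + ∑ i ∈ Finset.univ.erase L, β i := by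
  rw [← Finset.add_sum_erase _ _ (Finset.mem_univ L), Function.update_self]
  congr 1
  apply Finset.sum_congr rfl
  intro i hi
  exact Function.update_of_ne (Finset.mem_erase.mp hi).1 _ _

lemma sum_split {m : ℕ} (β : Fin m → ℕ) (L : Fin m) :
    ∑ i, β i = β L + ∑ i ∈ Finset.univ.erase L, β i :=
  (Finset.add_sum_erase _ _ (Finset.mem_univ L)).symm

lemma card_filter_ge {m n h : ℕ} (L : Fin m) (hn : h ≤ n) :
    ((Finset.Nat.antidiagonalTuple m n).filter (fun β => h ≤ β L)).card =
      (Finset.Nat.antidiagonalTuple m (n - h)).card := by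
  refine Finset.card_nbij' (fun β => Function.update β L (β L - h))
    (fun γ => Function.update γ L (γ L + h)) ?_ ?_ ?_ ?_
  · intro β hβ
    simp only [Finset.mem_coe] at hβ ⊢
    rw [Finset.mem_filter, Finset.Nat.mem_antidiagonalTuple] at hβ
    obtain ⟨hsum, hL⟩ := hβ
    rw [Finset.Nat.mem_antidiagonalTuple, sum_update_univ]
    rw [sum_split β L] at hsum
    omega
  · intro γ hγ
    simp only [Finset.mem_coe] at hγ
    rw [Finset.Nat.mem_antidiagonalTuple] at hγ
    dsimp only
    rw [Finset.mem_coe, Finset.mem_filter, Finset.Nat.mem_antidiagonalTuple, sum_update_univ,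
      Function.update_self]
    rw [sum_split γ L] at hγ
    constructor
    · omega
    · omega
  · intro β hβ
    rw [Finset.mem_coe, Finset.mem_filter] at hβ
    dsimp only
    rw [Function.update_self, Function.update_idem]
    have : β L - h + h = β L := by omega
    rw [this, Function.update_eq_self]
  · intro γ _
    dsimp only
    rw [Function.update_self, Function.update_idem, Nat.add_sub_cancel,
      Function.update_eq_self]

lemma dot_le_top {m : ℕ} (p : Fin m → ℕ) (hp : Monotone p) (hm : 1 ≤ m) {n : ℕ}
    {β : Fin m → ℕ} (hβ : β ∈ Finset.Nat.antidiagonalTuple m n) :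
    ∑ t, p t * β t ≤ p ⟨m - 1, Nat.sub_lt hm Nat.one_pos⟩ * n := by
  rw [Finset.Nat.mem_antidiagonalTuple] at hβ
  calc ∑ t, p t * β t ≤ ∑ t, p ⟨m - 1, by omega⟩ * β t := by
        apply Finset.sum_le_sum
        intro t _
        exact Nat.mul_le_mul_right _ (hp (by rw [Fin.le_def]; simp; omega))
    _ = p ⟨m - 1, by omega⟩ * n := by rw [← Finset.mul_sum, hβ]

lemma bot_le_dot {m : ℕ} (p : Fin m → ℕ) (hp : Monotone p) (hm : 1 ≤ m) {n : ℕ}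
    {β : Fin m → ℕ} (hβ : β ∈ Finset.Nat.antidiagonalTuple m n) :
    p ⟨0, hm⟩ * n ≤ ∑ t, p t * β t := by
  rw [Finset.Nat.mem_antidiagonalTuple] at hβ
  calc p ⟨0, hm⟩ * n = ∑ t, p ⟨0, hm⟩ * β t := by rw [← Finset.mul_sum, hβ]
    _ ≤ ∑ t, p t * β t := by
        apply Finset.sum_le_sum
        intro t _
        exact Nat.mul_le_mul_right _ (hp (by rw [Fin.le_def]; simp))

lemma coord_le_dot {m : ℕ} (p : Fin m → ℕ) (L : Fin m) (β : Fin m → ℕ) :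
    p L * β L ≤ ∑ t, p t * β t :=
  Finset.single_le_sum (f := fun t => p t * β t) (fun t _ => Nat.zero_le _) (Finset.mem_univ L)

/-! ### main integer-level bounds -/

section Main

variable {m : ℕ} (hm : 1 ≤ m) (p : Fin m → ℕ) (a : ℤ)

lemma p_le_top (hp : Monotone p) (t : Fin m) : p t ≤ p ⟨m - 1, Nat.sub_lt hm Nat.one_pos⟩ :=
  hp (by rw [Fin.le_def]; simp; omega)

lemma p_bot_le (hp : Monotone p) (t : Fin m) : p ⟨0, hm⟩ ≤ p t :=
  hp (by rw [Fin.le_def]; simp)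

lemma main_ub (hp : Monotone p) (j : ℕ) : ∃ n0 : ℕ, ∀ n : ℕ, n0 ≤ n →
    ∑ β ∈ Finset.Nat.antidiagonalTuple m n, zc (((∑ t, p t * β t : ℕ) : ℤ) + a) j ≤
      ((n + m - 1).choose (m - 1) : ℤ) * zc (((p ⟨m - 1, Nat.sub_lt hm Nat.one_pos⟩ * n : ℕ) : ℤ) + a) j := by
  by_cases hPL : p ⟨m - 1, by omega⟩ = 0
  · refine ⟨0, fun n _ => ?_⟩
    have hz : ∀ t, p t = 0 := fun t => Nat.le_zero.mp (hPL ▸ p_le_top hm p hp t)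
    have hterm : ∀ β ∈ Finset.Nat.antidiagonalTuple m n,
        zc (((∑ t, p t * β t : ℕ) : ℤ) + a) j = zc a j := by
      intro β _
      have : (∑ t, p t * β t) = 0 := Finset.sum_eq_zero fun t _ => by rw [hz t, Nat.zero_mul]
      rw [this]; norm_num
    rw [Finset.sum_congr rfl hterm, Finset.sum_const, card_antidiagonalTuple' hm,
      nsmul_eq_mul, hPL]
    norm_num
  · have hP1 : 1 ≤ p ⟨m - 1, by omega⟩ := by omega
    refine ⟨2 * j + 2 * a.natAbs + 2, fun n hn => ?_⟩
    have hterm : ∀ β ∈ Finset.Nat.antidiagonalTuple m n,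
        zc (((∑ t, p t * β t : ℕ) : ℤ) + a) j ≤
          zc (((p ⟨m - 1, by omega⟩ * n : ℕ) : ℤ) + a) j := by
      intro β hβ
      have hdot := dot_le_top p hp hm hβ
      have hPn : (n : ℤ) ≤ ((p ⟨m - 1, by omega⟩ * n : ℕ) : ℤ) := by
        have : n ≤ p ⟨m - 1, by omega⟩ * n := Nat.le_mul_of_pos_left n hP1
        exact_mod_cast this
      refine zc_le_big (a := a) j (by omega) ?_ ?_ ?_
      · have : ((∑ t, p t * β t : ℕ) : ℤ) ≤ ((p ⟨m - 1, by omega⟩ * n : ℕ) : ℤ) := by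
          exact_mod_cast hdot
        omega
      · omega
      · omega
    calc ∑ β ∈ Finset.Nat.antidiagonalTuple m n, zc (((∑ t, p t * β t : ℕ) : ℤ) + a) j
        ≤ ∑ _β ∈ Finset.Nat.antidiagonalTuple m n,
            zc (((p ⟨m - 1, by omega⟩ * n : ℕ) : ℤ) + a) j := Finset.sum_le_sum hterm
      _ = ((n + m - 1).choose (m - 1) : ℤ) * zc (((p ⟨m - 1, by omega⟩ * n : ℕ) : ℤ) + a) j := by
          rw [Finset.sum_const, card_antidiagonalTuple' hm, nsmul_eq_mul]

lemma main_lb (hp : Monotone p) (j : ℕ) : ∃ n0 : ℕ, ∀ n : ℕ, n0 ≤ n →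
    ((n + m - 1).choose (m - 1) : ℤ) * zc (((p ⟨0, hm⟩ * n : ℕ) : ℤ) + a) j ≤
      ∑ β ∈ Finset.Nat.antidiagonalTuple m n, zc (((∑ t, p t * β t : ℕ) : ℤ) + a) j := by
  have hcardconst : ∀ n (c : ℤ), (∑ _β ∈ Finset.Nat.antidiagonalTuple m n, c) =
      ((n + m - 1).choose (m - 1) : ℤ) * c := by
    intro n c
    rw [Finset.sum_const, card_antidiagonalTuple' hm, nsmul_eq_mul]
  rcases Nat.eq_zero_or_pos j with hj0 | hj1
  · refine ⟨0, fun n _ => ?_⟩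
    subst hj0
    simp only [zc_zero, mul_one]
    rw [hcardconst n 1, mul_one]
  by_cases hZ1 : 1 ≤ p ⟨0, hm⟩
  · -- bottom weight positive: termwise monotonicity
    refine ⟨j + a.natAbs + 1, fun n hn => ?_⟩
    have hx0 : (j : ℤ) ≤ ((p ⟨0, hm⟩ * n : ℕ) : ℤ) + a := by
      have h1 : n ≤ p ⟨0, hm⟩ * n := Nat.le_mul_of_pos_left n hZ1
      have h2 : (n : ℤ) ≤ ((p ⟨0, hm⟩ * n : ℕ) : ℤ) := by exact_mod_cast h1
      omega
    rw [← hcardconst n _]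
    apply Finset.sum_le_sum
    intro β hβ
    have hbot := bot_le_dot p hp hm hβ
    refine zc_mono j (by omega) ?_
    have : ((p ⟨0, hm⟩ * n : ℕ) : ℤ) ≤ ((∑ t, p t * β t : ℕ) : ℤ) := by exact_mod_cast hbot
    omega
  have hZ0 : p ⟨0, hm⟩ = 0 := by omega
  simp only [hZ0, Nat.zero_mul, Nat.cast_zero, zero_add]
  by_cases hB : zc a j ≤ 0
  · refine ⟨0, fun n _ => ?_⟩
    rw [← hcardconst n _]
    apply Finset.sum_le_sum
    intro β _
    exact zc_ge_of_nonpos j hB (by omega)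
  push_neg at hB
  rcases le_or_gt 0 a with ha | ha
  · -- a ≥ 0 and zc a j > 0 : termwise
    refine ⟨0, fun n _ => ?_⟩
    rw [← hcardconst n _]
    apply Finset.sum_le_sum
    intro β _
    exact zc_mono j ha (by omega)
  · -- nasty case
    have hEven : Even j := even_of_zc_pos ha hB
    by_cases hPL : p ⟨m - 1, by omega⟩ = 0
    · refine ⟨0, fun n _ => ?_⟩
      have hz : ∀ t, p t = 0 := fun t => Nat.le_zero.mp (hPL ▸ p_le_top hm p hp t)
      have hterm : ∀ β ∈ Finset.Nat.antidiagonalTuple m n,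
          zc a j = zc (((∑ t, p t * β t : ℕ) : ℤ) + a) j := by
        intro β _
        have : (∑ t, p t * β t) = 0 := Finset.sum_eq_zero fun t _ => by rw [hz t, Nat.zero_mul]
        rw [this]; norm_num
      rw [← hcardconst n (zc a j)]
      exact le_of_eq (Finset.sum_congr rfl hterm)
    · have hP1 : 1 ≤ p ⟨m - 1, by omega⟩ := by omega
      set L : Fin m := ⟨m - 1, by omega⟩ with hL
      set Bn : ℕ := ((j : ℤ) - 1 - a).toNat.choose j with hBn
      have hzcA : zc a j = (Bn : ℤ) := by
        rw [zc, if_neg (not_le.mpr ha), hEven.neg_one_pow, one_mul]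
      set h : ℕ := j + Bn + a.natAbs with hh
      set r : ℕ := m - 1 with hr
      set s : ℕ := h + r with hs
      refine ⟨h + s + Bn * h * s * 2 ^ h + 1, fun n hn => ?_⟩
      set q : ℕ := n - h with hq
      have hhn : h ≤ n := by omega
      have hsq : s ≤ q := by omega
      have hqbig : Bn * h * s * 2 ^ h ≤ q := by omega
      have hq1 : 1 ≤ q := by omega
      have hE1 : (n - h) + m - 1 = q + r := by omega
      have hE2 : m - 1 = r := hr.symm
      have hE3 : n + m - 1 = n + r := by omega
      -- Step C : numeric comparison (pure arithmetic, done first)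
      have hstepC : (n + r).choose r * Bn ≤ (q + r).choose r * (Bn + 1) := by
        have hCC := claim_CC r q h
        have hPP := claim_PP Bn s q h (by omega) hsq hqbig
        have hqs : q + s = q + h + r := by omega
        rw [hqs] at hPP
        have hnr : n + r = q + h + r := by omega
        rw [hnr]
        have key : ((q + h + r).choose r * Bn) * q ^ h ≤ ((q + r).choose r * (Bn + 1)) * q ^ h := by
          calc ((q + h + r).choose r * Bn) * q ^ h
              = Bn * ((q + h + r).choose r * q ^ h) := by ring
            _ ≤ Bn * ((q + r).choose r * (q + h + r) ^ h) := Nat.mul_le_mul_left _ hCC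
            _ = (q + r).choose r * (Bn * (q + h + r) ^ h) := by ring
            _ ≤ (q + r).choose r * ((Bn + 1) * q ^ h) := Nat.mul_le_mul_left _ hPP
            _ = ((q + r).choose r * (Bn + 1)) * q ^ h := by ring
        exact Nat.le_of_mul_le_mul_right key (Nat.pow_pos hq1)
      -- Step B : each filtered term is at least Bn + 1
      have hstepB : ∀ β ∈ (Finset.Nat.antidiagonalTuple m n).filter (fun β => h ≤ β L),
          (Bn : ℤ) + 1 ≤ zc (((∑ t, p t * β t : ℕ) : ℤ) + a) j := by
        intro β hβ
        rw [Finset.mem_filter] at hβ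
        obtain ⟨hβ1, hβ2⟩ := hβ
        have h1 : h ≤ ∑ t, p t * β t := by
          have h2 : p L * β L ≤ ∑ t, p t * β t := coord_le_dot p L β
          have h3 : β L ≤ p L * β L := Nat.le_mul_of_pos_left _ hP1
          omega
        apply zc_big hj1
        have h4 : (h : ℤ) ≤ ((∑ t, p t * β t : ℕ) : ℤ) := by exact_mod_cast h1
        have h5 : (h : ℤ) = (j : ℤ) + Bn + a.natAbs := by rw [hh]; push_cast; ring
        omega
      -- Step A : restrict the sum to the filtered set
      have hstepA : ∑ β ∈ (Finset.Nat.antidiagonalTuple m n).filter (fun β => h ≤ β L),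
            zc (((∑ t, p t * β t : ℕ) : ℤ) + a) j ≤
          ∑ β ∈ Finset.Nat.antidiagonalTuple m n, zc (((∑ t, p t * β t : ℕ) : ℤ) + a) j :=
        Finset.sum_le_sum_of_subset_of_nonneg (Finset.filter_subset _ _)
          (fun β _ _ => zc_nonneg_even hEven _)
      -- filtered cardinality
      have hcardF : ((Finset.Nat.antidiagonalTuple m n).filter (fun β => h ≤ β L)).card =
          (q + r).choose r := by
        rw [card_filter_ge L hhn, card_antidiagonalTuple' hm, hE1, hE2]
      -- assemble
      have hsum1 : (((q + r).choose r : ℕ) : ℤ) * ((Bn : ℤ) + 1) ≤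
          ∑ β ∈ (Finset.Nat.antidiagonalTuple m n).filter (fun β => h ≤ β L),
            zc (((∑ t, p t * β t : ℕ) : ℤ) + a) j := by
        have hns := Finset.card_nsmul_le_sum
          ((Finset.Nat.antidiagonalTuple m n).filter (fun β => h ≤ β L))
          (fun β => zc (((∑ t, p t * β t : ℕ) : ℤ) + a) j) ((Bn : ℤ) + 1) hstepB
        rw [hcardF] at hns
        rw [← nsmul_eq_mul]
        exact hns
      have hfinal : ((n + m - 1).choose (m - 1) : ℤ) * zc a j ≤
          (((q + r).choose r : ℕ) : ℤ) * ((Bn : ℤ) + 1) := by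
        rw [hzcA, hE3, hE2]
        exact_mod_cast hstepC
      exact le_trans (le_trans hfinal hsum1) hstepA

end Main


/-- `F j k = Σ_{β ∈ ℕ^m, |β| = k-b} C(p·β + a, j)`, the `j`-th higher iterated Hilbert
coefficient of `A(-a,-b)_k`. -/
noncomputable def coeffSum (m : ℕ) (p : Fin m → ℕ) (a b : ℤ) (j : ℕ) (k : ℤ) : ℚ :=
  ∑ β ∈ Finset.Nat.antidiagonalTuple m (k - b).toNat,
    Ring.choose (((∑ t, p t * β t : ℕ) : ℚ) + (a : ℚ)) j

lemma coeffSum_eq_int (m : ℕ) (p : Fin m → ℕ) (a b : ℤ) (j : ℕ) (k : ℤ) :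
    coeffSum m p a b j k =
      ((∑ β ∈ Finset.Nat.antidiagonalTuple m (k - b).toNat,
        zc (((∑ t, p t * β t : ℕ) : ℤ) + a) j : ℤ) : ℚ) := by
  rw [coeffSum, Int.cast_sum]
  refine Finset.sum_congr rfl fun β _ => ?_
  have hcast : ((∑ t, p t * β t : ℕ) : ℚ) + (a : ℚ) =
      ((((∑ t, p t * β t : ℕ) : ℤ) + a : ℤ) : ℚ) := by push_cast; ring
  rw [hcast, ringChoose_int]

lemma rc_nat {m : ℕ} (hm : 1 ≤ m) {b k : ℤ} (hk : b ≤ k) :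
    Ring.choose ((k : ℚ) - (b : ℚ) + (m : ℚ) - 1) (m - 1) =
      ((((k - b).toNat + m - 1).choose (m - 1) : ℕ) : ℚ) := by
  have h1 : (((k - b).toNat : ℤ)) = k - b := Int.toNat_of_nonneg (by omega)
  have h2 : ((k : ℚ) - (b : ℚ) + (m : ℚ) - 1) = (((k - b).toNat + m - 1 : ℕ) : ℚ) := by
    push_cast [Nat.cast_sub (show 1 ≤ (k - b).toNat + m by omega)]
    have h3 : (((k - b).toNat : ℚ)) = (k : ℚ) - b := by exact_mod_cast congrArg (Int.cast : ℤ → ℚ) h1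
    linarith [h3]
  rw [h2, Ring.choose_natCast]

lemma rc_term {b k : ℤ} (a : ℤ) (c j : ℕ) (hk : b ≤ k) :
    Ring.choose ((c : ℚ) * ((k : ℚ) - (b : ℚ)) + (a : ℚ)) j =
      ((zc (((c * (k - b).toNat : ℕ) : ℤ) + a) j : ℤ) : ℚ) := by
  have h1 : (((k - b).toNat : ℤ)) = k - b := Int.toNat_of_nonneg (by omega)
  have h3 : (((k - b).toNat : ℚ)) = (k : ℚ) - b := by
    exact_mod_cast congrArg (Int.cast : ℤ → ℚ) h1
  have h2 : ((c : ℚ) * ((k : ℚ) - (b : ℚ)) + (a : ℚ)) =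
      ((((c * (k - b).toNat : ℕ) : ℤ) + a : ℤ) : ℚ) := by
    push_cast [h3]
    ring
  rw [h2, ringChoose_int]


/-- With `p_1 ≤ … ≤ p_m` nonnegative integers, `a, b` integers and `j ≥ 0`, the sum
`F(k) = Σ_{|β| = k-b} C(p·β + a, j)` satisfies, for `k ≫ 0`,
`C(k-b+m-1, m-1) C(p_1(k-b)+a, j) ≤ F(k) ≤ C(k-b+m-1, m-1) C(p_m(k-b)+a, j)`, and the upper
bound is attained for all `k ≫ 0` and all `j` if and only if `p_1 = p_2 = ⋯ = p_m`. -/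
theorem coeffSum_bounds_and_equality_iff
    (m : ℕ) (hm : 1 ≤ m) (p : Fin m → ℕ) (hp : Monotone p) (a b : ℤ) :
    (∀ j : ℕ, ∃ N : ℤ, ∀ k ≥ N,
      Ring.choose ((k : ℚ) - (b : ℚ) + (m : ℚ) - 1) (m - 1) *
          Ring.choose ((p ⟨0, hm⟩ : ℚ) * ((k : ℚ) - (b : ℚ)) + (a : ℚ)) j ≤
        coeffSum m p a b j k ∧
      coeffSum m p a b j k ≤
        Ring.choose ((k : ℚ) - (b : ℚ) + (m : ℚ) - 1) (m - 1) *
          Ring.choose ((p ⟨m - 1, by omega⟩ : ℚ) * ((k : ℚ) - (b : ℚ)) + (a : ℚ)) j) ∧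
    ((∀ j : ℕ, ∃ N : ℤ, ∀ k ≥ N, coeffSum m p a b j k =
        Ring.choose ((k : ℚ) - (b : ℚ) + (m : ℚ) - 1) (m - 1) *
          Ring.choose ((p ⟨m - 1, by omega⟩ : ℚ) * ((k : ℚ) - (b : ℚ)) + (a : ℚ)) j) ↔
      ∀ t t' : Fin m, p t = p t') := by
  constructor
  · -- the bounds
    intro j
    obtain ⟨n1, hLB⟩ := main_lb hm p a hp j
    obtain ⟨n2, hUB⟩ := main_ub hm p a hp j
    refine ⟨b + n1 + n2, fun k hk => ?_⟩
    have hbk : b ≤ k := by omega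
    have hn1 : n1 ≤ (k - b).toNat := by omega
    have hn2 : n2 ≤ (k - b).toNat := by omega
    constructor
    · rw [coeffSum_eq_int, rc_nat hm hbk, rc_term a (p ⟨0, hm⟩) j hbk]
      exact_mod_cast hLB _ hn1
    · rw [coeffSum_eq_int, rc_nat hm hbk, rc_term a (p ⟨m - 1, by omega⟩) j hbk]
      exact_mod_cast hUB _ hn2
  constructor
  · -- equality implies all equal
    intro H
    have hm1 : m - 1 < m := by omega
    have key : ∀ t : Fin m, p t = p ⟨m - 1, hm1⟩ := by
      obtain ⟨N, hN⟩ := H 1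
      set k : ℤ := max N (b + 1) with hkdef
      have h1 : N ≤ k := le_max_left _ _
      have h2 : b + 1 ≤ k := le_max_right _ _
      have hbk : b ≤ k := by omega
      specialize hN k h1
      set n : ℕ := (k - b).toNat with hn
      have hn1 : 1 ≤ n := by omega
      have hC1 : 0 < (n + m - 1).choose (m - 1) := Nat.choose_pos (by omega)
      rw [coeffSum_eq_int, rc_nat hm hbk, rc_term a (p ⟨m - 1, hm1⟩) 1 hbk] at hN
      have hZ : (∑ β ∈ Finset.Nat.antidiagonalTuple m n,
            zc (((∑ t, p t * β t : ℕ) : ℤ) + a) 1)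
          = ((n + m - 1).choose (m - 1) : ℤ) *
            zc (((p ⟨m - 1, hm1⟩ * n : ℕ) : ℤ) + a) 1 := by exact_mod_cast hN
      simp only [zc_one] at hZ
      rw [Finset.sum_add_distrib, Finset.sum_const, card_antidiagonalTuple' hm,
        nsmul_eq_mul, mul_add] at hZ
      have hmain : (∑ β ∈ Finset.Nat.antidiagonalTuple m n, ((∑ t, p t * β t : ℕ) : ℤ)) =
          ((n + m - 1).choose (m - 1) : ℤ) * ((p ⟨m - 1, hm1⟩ * n : ℕ) : ℤ) :=
        add_right_cancel hZ
      have hNat : (∑ β ∈ Finset.Nat.antidiagonalTuple m n, ∑ t, p t * β t) =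
          (n + m - 1).choose (m - 1) * (p ⟨m - 1, hm1⟩ * n) := by exact_mod_cast hmain
      -- symmetry of coordinates
      have hsym : ∀ t : Fin m, (∑ β ∈ Finset.Nat.antidiagonalTuple m n, β t) =
          ∑ β ∈ Finset.Nat.antidiagonalTuple m n, β ⟨0, hm⟩ :=
        fun t => sum_coord_eq m n t ⟨0, hm⟩
      set S : ℕ := ∑ β ∈ Finset.Nat.antidiagonalTuple m n, β ⟨0, hm⟩ with hS
      have hswap : (∑ β ∈ Finset.Nat.antidiagonalTuple m n, ∑ t, p t * β t) =
          (∑ t, p t) * S := by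
        rw [Finset.sum_comm]
        have hmul : ∀ t : Fin m, (∑ β ∈ Finset.Nat.antidiagonalTuple m n, p t * β t)
            = p t * S := fun t => by rw [← Finset.mul_sum, hsym t]
        rw [Finset.sum_congr rfl (fun t _ => hmul t), ← Finset.sum_mul]
      have hmS : m * S = (n + m - 1).choose (m - 1) * n := by
        have h3 : (∑ _t : Fin m, S) = m * S := by
          rw [Finset.sum_const, Finset.card_univ, Fintype.card_fin, smul_eq_mul]
        have h4 : (∑ t : Fin m, ∑ β ∈ Finset.Nat.antidiagonalTuple m n, β t)
            = ∑ _t : Fin m, S := Finset.sum_congr rfl fun t _ => hsym t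
        have h5 : (∑ β ∈ Finset.Nat.antidiagonalTuple m n, ∑ t : Fin m, β t)
            = ∑ _β ∈ Finset.Nat.antidiagonalTuple m n, (n : ℕ) :=
          Finset.sum_congr rfl fun β hβ => Finset.Nat.mem_antidiagonalTuple.mp hβ
        rw [← h3, ← h4, Finset.sum_comm, h5, Finset.sum_const, card_antidiagonalTuple' hm,
          smul_eq_mul]
      rw [hswap] at hNat
      have hE2 : (∑ t, p t) * ((n + m - 1).choose (m - 1) * n) =
          (m * p ⟨m - 1, hm1⟩) * ((n + m - 1).choose (m - 1) * n) := by
        calc (∑ t, p t) * ((n + m - 1).choose (m - 1) * n)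
            = (∑ t, p t) * (m * S) := by rw [hmS]
          _ = m * ((∑ t, p t) * S) := by ring
          _ = m * ((n + m - 1).choose (m - 1) * (p ⟨m - 1, hm1⟩ * n)) := by rw [hNat]
          _ = (m * p ⟨m - 1, hm1⟩) * ((n + m - 1).choose (m - 1) * n) := by ring
      have hCn : 0 < (n + m - 1).choose (m - 1) * n := Nat.mul_pos hC1 hn1
      have hsum_eq : (∑ t, p t) = m * p ⟨m - 1, hm1⟩ :=
        Nat.eq_of_mul_eq_mul_right hCn hE2
      have hconst : (∑ _t : Fin m, p ⟨m - 1, hm1⟩) = m * p ⟨m - 1, hm1⟩ := by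
        rw [Finset.sum_const, Finset.card_univ, Fintype.card_fin, smul_eq_mul]
      have hall := (Finset.sum_eq_sum_iff_of_le
        (fun t _ => p_le_top hm p hp t)).mp (hsum_eq.trans hconst.symm)
      exact fun t => hall t (Finset.mem_univ t)
    exact fun t t' => (key t).trans (key t').symm
  · -- all equal implies equality
    intro hpe j
    refine ⟨b, fun k hk => ?_⟩
    rw [coeffSum_eq_int, rc_nat hm hk, rc_term a (p ⟨m - 1, by omega⟩) j hk]
    set n : ℕ := (k - b).toNat with hn
    have hterm : ∀ β ∈ Finset.Nat.antidiagonalTuple m n,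
        zc (((∑ t, p t * β t : ℕ) : ℤ) + a) j =
          zc (((p ⟨m - 1, by omega⟩ * n : ℕ) : ℤ) + a) j := by
      intro β hβ
      have hβ' := Finset.Nat.mem_antidiagonalTuple.mp hβ
      have hd : (∑ t, p t * β t) = p ⟨m - 1, by omega⟩ * n := by
        calc ∑ t, p t * β t = ∑ t, p ⟨m - 1, by omega⟩ * β t :=
              Finset.sum_congr rfl (fun t _ => by rw [hpe t ⟨m - 1, by omega⟩])
          _ = p ⟨m - 1, by omega⟩ * n := by rw [← Finset.mul_sum, hβ']
      rw [hd]
    rw [Finset.sum_congr rfl hterm, Finset.sum_const, card_antidiagonalTuple' hm, nsmul_eq_mul]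
    push_cast
    ring
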